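/- For θ = √2 - 1 = [2,2,2,...], the heavy set H_θ has Hausdorff dimension log 3 / log(3 + 2√2), and this value lies strictly between 0 and 1. -/

import Mathlib

open Filter Set

/-- The function `f = χ_{[0,1/2]} - χ_{(1/2,1)}` on the circle, evaluated at `x mod 1`. -/
noncomputable def circf (x : ℝ) : ℝ := if Int.fract x ≤ 1/2 then 1 else -1

/-- Birkhoff sums `Sₙ(x) = Σ_{i=0}^{n-1} f(x + iθ)`. -/
noncomputable def birk (θ : ℝ) (n : ℕ) (x : ℝ) : ℝ :=
  ∑ i ∈ Finset.range n, circf (x + i * θ)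

/-- The heavy set `H_θ`. -/
noncomputable def heavy (θ : ℝ) : Set ℝ :=
  {x ∈ Set.Ico (0:ℝ) 1 | ∀ n : ℕ, 1 ≤ n → 0 ≤ birk θ n x}

/-- The strictly heavy set `H*_θ`. -/
noncomputable def sheavy (θ : ℝ) : Set ℝ :=
  {x ∈ Set.Ico (0:ℝ) 1 | ∀ n : ℕ, 1 ≤ n → 0 < birk θ n x}

/-- For `θ = √2 - 1 = [2,2,2,…]`, the heavy set has Hausdorff dimension
`log 3 / log(3 + 2√2)`, a value strictly between `0` and `1`. -/
/- basic θ facts -/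
noncomputable def tq : ℝ := Real.sqrt 2 - 1
noncomputable def rq : ℝ := 1 - 2 * tq

lemma s2sq : Real.sqrt 2 ^ 2 = 2 := Real.sq_sqrt (by norm_num)
lemma s2lb : (1.41421 : ℝ) < Real.sqrt 2 := by
  nlinarith [s2sq, Real.sqrt_nonneg 2]
lemma s2ub : Real.sqrt 2 < 1.41422 := by
  nlinarith [s2sq, Real.sqrt_nonneg 2]
lemma tq_lb : (0.41421 : ℝ) < tq := by have := s2lb; rw [tq]; linarith
lemma tq_ub : tq < 0.41422 := by have := s2ub; rw [tq]; linarith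
lemma rq_def : rq = 1 - 2 * tq := rfl
lemma tq_sq : tq ^ 2 = rq := by rw [tq, rq, tq]; nlinarith [s2sq]
lemma rq_tq : rq * tq = tq - 2 * rq := by
  have h := tq_sq; rw [rq_def] at h ⊢; linear_combination (-2 : ℝ) * h
lemma rq_lb : (0.17156 : ℝ) < rq := by have := tq_ub; rw [rq_def]; linarith
lemma rq_ub : rq < 0.17158 := by have := tq_lb; rw [rq_def]; linarith
lemma rq_pos : 0 < rq := by have := rq_lb; linarith
lemma tq_pos : 0 < tq := by have := tq_lb; linarith

/- circf and birk basics -/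
lemma fract_eq_of {x : ℝ} (m : ℤ) (h1 : (m:ℝ) ≤ x) (h2 : x < m + 1) :
    Int.fract x = x - m := by
  have : ⌊x⌋ = m := Int.floor_eq_iff.2 ⟨h1, h2⟩
  rw [Int.fract, this]

lemma circf_pos {x : ℝ} (m : ℤ) (h1 : (m:ℝ) ≤ x) (h2 : x ≤ m + 1/2) :
    circf x = 1 := by
  have hf : Int.fract x = x - m := fract_eq_of m h1 (by linarith)
  simp only [circf, hf]
  rw [if_pos (by linarith)]

lemma circf_neg {x : ℝ} (m : ℤ) (h1 : (m:ℝ) + 1/2 < x) (h2 : x < m + 1) :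
    circf x = -1 := by
  have hf : Int.fract x = x - m := fract_eq_of m (by linarith) h2
  simp only [circf, hf]
  rw [if_neg (by linarith)]

lemma circf_intCast_add (x : ℝ) (m : ℤ) : circf (x + m) = circf x := by
  simp [circf, Int.fract_add_intCast]

lemma birk_zero (θ x : ℝ) : birk θ 0 x = 0 := by simp [birk]

lemma birk_succ (θ x : ℝ) (n : ℕ) :
    birk θ (n+1) x = birk θ n x + circf (x + n * θ) := by
  simp [birk, Finset.sum_range_succ]

lemma birk_one (θ x : ℝ) : birk θ 1 x = circf x := by simp [birk]

lemma birk_add (θ x : ℝ) (a b : ℕ) :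
    birk θ (a + b) x = birk θ a x + birk θ b (x + a * θ) := by
  rw [birk, birk, birk, Finset.sum_range_add]
  congr 1
  refine Finset.sum_congr rfl fun i _ => ?_
  push_cast
  ring_nf

lemma birk_intCast_add (θ x : ℝ) (n : ℕ) (m : ℤ) :
    birk θ n (x + m) = birk θ n x := by
  rw [birk, birk]
  refine Finset.sum_congr rfl fun i _ => ?_
  rw [show x + (m:ℝ) + i * θ = (x + i * θ) + m by ring, circf_intCast_add]

section Block
variable {u : ℝ}

lemma blockA (hu0 : 0 ≤ u) (hu : u ≤ 1/2) :
    birk tq 5 (rq*u) = 1 ∧ (∀ j, j ≤ 5 → 0 ≤ birk tq j (rq*u)) ∧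
      rq*u + 5*tq = rq*(u+tq) + 2 := by
  have hid := rq_def
  have hrt := rq_tq
  have ht1 := tq_lb; have ht2 := tq_ub; have hr1 := rq_lb; have hr2 := rq_ub
  have hb0 : 0 ≤ rq*u := mul_nonneg rq_pos.le hu0
  have hb1 : rq*u ≤ rq/2 := by nlinarith [rq_pos]
  have c0 : circf (rq*u) = 1 := circf_pos 0 (by push_cast; linarith) (by push_cast; linarith)
  have c1 : circf (rq*u + tq) = 1 := circf_pos 0 (by push_cast; linarith) (by push_cast; linarith)
  have c2 : circf (rq*u + 2*tq) = -1 := circf_neg 0 (by push_cast; linarith) (by push_cast; linarith)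
  have c3 : circf (rq*u + 3*tq) = 1 := circf_pos 1 (by push_cast; linarith) (by push_cast; linarith)
  have c4 : circf (rq*u + 4*tq) = -1 := circf_neg 1 (by push_cast; linarith) (by push_cast; linarith)
  refine ⟨?_, ?_, by linarith⟩
  · simp [birk, Finset.sum_range_succ, c0, c1, c2, c3, c4]
  · intro j hj
    interval_cases j <;> simp [birk, Finset.sum_range_succ, c0, c1, c2, c3, c4] <;> norm_num

lemma blockB1 (hu : 1/2 < u) (hu1 : u < 1 - tq) :
    birk tq 5 (rq*u) = -1 ∧ (∀ j, j ≤ 5 → -1 ≤ birk tq j (rq*u)) ∧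
      rq*u + 5*tq = rq*(u+tq) + 2 := by
  have hid := rq_def
  have hrt := rq_tq
  have ht1 := tq_lb; have ht2 := tq_ub; have hr1 := rq_lb; have hr2 := rq_ub
  have hbl : rq/2 < rq*u := by nlinarith [rq_pos]
  have hbu : rq*u < 3*rq - tq := by nlinarith [rq_pos]
  have c0 : circf (rq*u) = 1 := circf_pos 0 (by push_cast; linarith) (by push_cast; linarith)
  have c1 : circf (rq*u + tq) = -1 := circf_neg 0 (by push_cast; linarith) (by push_cast; linarith)
  have c2 : circf (rq*u + 2*tq) = -1 := circf_neg 0 (by push_cast; linarith) (by push_cast; linarith)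
  have c3 : circf (rq*u + 3*tq) = 1 := circf_pos 1 (by push_cast; linarith) (by push_cast; linarith)
  have c4 : circf (rq*u + 4*tq) = -1 := circf_neg 1 (by push_cast; linarith) (by push_cast; linarith)
  refine ⟨?_, ?_, by linarith⟩
  · simp [birk, Finset.sum_range_succ, c0, c1, c2, c3, c4]
  · intro j hj
    interval_cases j <;> simp [birk, Finset.sum_range_succ, c0, c1, c2, c3, c4] <;> norm_num

lemma blockB2 (hu : 1 - tq ≤ u) (hu1 : u < 1) :
    birk tq 7 (rq*u) = -1 ∧ (∀ j, j ≤ 7 → -1 ≤ birk tq j (rq*u)) ∧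
      rq*u + 7*tq = rq*(u+tq-1) + 3 := by
  have hid := rq_def
  have hrt := rq_tq
  have ht1 := tq_lb; have ht2 := tq_ub; have hr1 := rq_lb; have hr2 := rq_ub
  have hbl : 3*rq - tq ≤ rq*u := by nlinarith [rq_pos]
  have hbu : rq*u < rq := by nlinarith [rq_pos]
  have c0 : circf (rq*u) = 1 := circf_pos 0 (by push_cast; linarith) (by push_cast; linarith)
  have c1 : circf (rq*u + tq) = -1 := circf_neg 0 (by push_cast; linarith) (by push_cast; linarith)
  have c2 : circf (rq*u + 2*tq) = -1 := circf_neg 0 (by push_cast; linarith) (by push_cast; linarith)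
  have c3 : circf (rq*u + 3*tq) = 1 := circf_pos 1 (by push_cast; linarith) (by push_cast; linarith)
  have c4 : circf (rq*u + 4*tq) = -1 := circf_neg 1 (by push_cast; linarith) (by push_cast; linarith)
  have c5 : circf (rq*u + 5*tq) = 1 := circf_pos 2 (by push_cast; linarith) (by push_cast; linarith)
  have c6 : circf (rq*u + 6*tq) = -1 := circf_neg 2 (by push_cast; linarith) (by push_cast; linarith)
  refine ⟨?_, ?_, by linarith⟩
  · simp [birk, Finset.sum_range_succ, c0, c1, c2, c3, c4, c5, c6]
  · intro j hj
    interval_cases j <;> simp [birk, Finset.sum_range_succ, c0, c1, c2, c3, c4, c5, c6] <;> norm_num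

/-- block length -/
noncomputable def Lw (u : ℝ) : ℕ := if u < 1 - tq then 5 else 7

lemma Lw_ge (u : ℝ) : 5 ≤ Lw u := by unfold Lw; split <;> norm_num
lemma Lw_pos (u : ℝ) : 0 < Lw u := lt_of_lt_of_le (by norm_num) (Lw_ge u)

lemma circf_of_Ico (hu0 : 0 ≤ u) (hu1 : u < 1) :
    circf u = if u ≤ 1/2 then 1 else -1 := by
  split_ifs with h
  · exact circf_pos 0 (by push_cast; linarith) (by push_cast; linarith)
  · exact circf_neg 0 (by push_cast; linarith) (by push_cast; linarith)

lemma block (hu0 : 0 ≤ u) (hu1 : u < 1) :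
    birk tq (Lw u) (rq*u) = circf u ∧
    (∀ j, j ≤ Lw u → min 0 (circf u) ≤ birk tq j (rq*u)) ∧
    ∃ p : ℤ, rq*u + (Lw u : ℝ)*tq = rq * Int.fract (u+tq) + p := by
  have ht1 := tq_lb; have ht2 := tq_ub
  have hcirc := circf_of_Ico hu0 hu1
  rcases lt_or_ge u (1 - tq) with hB | hB
  · have hL : Lw u = 5 := if_pos hB
    have hfr : Int.fract (u + tq) = u + tq := Int.fract_eq_self.2 ⟨by linarith, by linarith⟩
    rcases le_or_gt u (1/2) with hA | hA
    · obtain ⟨e1, e2, e3⟩ := blockA hu0 hA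
      rw [hL, hfr, hcirc, if_pos hA]
      exact ⟨e1, fun j hj => le_trans (min_le_left _ _) (e2 j hj),
        ⟨2, by push_cast; linarith⟩⟩
    · obtain ⟨e1, e2, e3⟩ := blockB1 hA hB
      rw [hL, hfr, hcirc, if_neg (not_le.2 hA)]
      exact ⟨e1, fun j hj => le_trans (min_le_right _ _) (e2 j hj),
        ⟨2, by push_cast; linarith⟩⟩
  · have hL : Lw u = 7 := if_neg (not_lt.2 hB)
    have hA : ¬ u ≤ 1/2 := by push_neg; linarith
    have hfr : Int.fract (u + tq) = u + tq - 1 := by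
      rw [show (1:ℝ) = ((1:ℤ):ℝ) by norm_num] at *
      exact fract_eq_of 1 (by push_cast at *; linarith) (by push_cast at *; linarith)
    obtain ⟨e1, e2, e3⟩ := blockB2 hB hu1
    rw [hL, hfr, hcirc, if_neg hA]
    exact ⟨e1, fun j hj => le_trans (min_le_right _ _) (e2 j hj),
      ⟨3, by push_cast; linarith⟩⟩
end Block
section Renorm

lemma fract_shift (a b : ℝ) : Int.fract (Int.fract a + b) = Int.fract (a + b) := by
  have h : Int.fract a + b = (a + b) - (⌊a⌋ : ℤ) := by rw [Int.fract]; ring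
  rw [h, Int.fract_sub_intCast]

noncomputable def Nblk : ℕ → ℝ → ℕ
  | 0, _ => 0
  | (m+1), u => Lw u + Nblk m (Int.fract (u + tq))

lemma Nblk_ge (m : ℕ) : ∀ u : ℝ, 5*m ≤ Nblk m u := by
  induction m with
  | zero => intro u; simp [Nblk]
  | succ m ih =>
    intro u
    have := Lw_ge u
    have := ih (Int.fract (u + tq))
    simp only [Nblk]
    omega

lemma Nblk_birk (m : ℕ) : ∀ u : ℝ, 0 ≤ u → u < 1 →
    birk tq (Nblk m u) (rq*u) = birk tq m u ∧
    ∃ p : ℤ, rq*u + (Nblk m u : ℝ)*tq = rq * Int.fract (u + m*tq) + p := by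
  induction m with
  | zero =>
    intro u h0 h1
    refine ⟨by simp [Nblk, birk_zero], 0, ?_⟩
    simp [Nblk, Int.fract_eq_self.2 ⟨h0, h1⟩]
  | succ m ih =>
    intro u h0 h1
    set u' := Int.fract (u + tq) with hu'
    have h0' : 0 ≤ u' := Int.fract_nonneg _
    have h1' : u' < 1 := Int.fract_lt_one _
    obtain ⟨b1, _, p, hp⟩ := block h0 h1
    obtain ⟨ih1, q, hq⟩ := ih u' h0' h1'
    have hNb : Nblk (m+1) u = Lw u + Nblk m u' := rfl
    have hshift : birk tq m u' = birk tq m (u + tq) := by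
      have : u + tq = u' + (⌊u + tq⌋ : ℤ) := by rw [hu', Int.fract]; ring
      rw [this, birk_intCast_add]
    constructor
    · rw [hNb, birk_add, b1, hp, birk_intCast_add, ih1, hshift]
      rw [show m + 1 = 1 + m by ring, birk_add, birk_one]
      norm_num
    · refine ⟨q + p, ?_⟩
      have e1 : rq*u + (↑(Lw u + Nblk m u'):ℝ)*tq
          = (rq*u' + (Nblk m u' : ℝ)*tq) + p := by push_cast; push_cast at hp; linarith
      rw [hNb, e1, hq]
      have : Int.fract (u' + m*tq) = Int.fract (u + (m+1)*tq) := by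
        rw [hu', fract_shift]
        congr 1; ring
      rw [this]; push_cast; ring

lemma decomp : ∀ n : ℕ, ∀ u : ℝ, 0 ≤ u → u < 1 →
    ∃ m j, n = Nblk m u + j ∧ j < Lw (Int.fract (u + m*tq)) := by
  intro n
  induction n using Nat.strong_induction_on with
  | _ n ih =>
    intro u h0 h1
    rcases lt_or_ge n (Lw u) with h | h
    · refine ⟨0, n, by simp [Nblk], ?_⟩
      simpa [Int.fract_eq_self.2 ⟨h0, h1⟩] using h
    · have hlt : n - Lw u < n := by have := Lw_pos u; omega
      obtain ⟨m, j, hmj, hj⟩ := ih (n - Lw u) hlt (Int.fract (u + tq))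
        (Int.fract_nonneg _) (Int.fract_lt_one _)
      refine ⟨m+1, j, ?_, ?_⟩
      · have : Nblk (m+1) u = Lw u + Nblk m (Int.fract (u + tq)) := rfl
        omega
      · have : Int.fract (Int.fract (u + tq) + m*tq) = Int.fract (u + (↑(m+1):ℝ)*tq) := by
          rw [fract_shift]; congr 1; push_cast; ring
        rwa [this] at hj

lemma birk_prefix (u : ℝ) (m j : ℕ) (h0 : 0 ≤ u) (h1 : u < 1) :
    birk tq (Nblk m u + j) (rq*u) = birk tq m u + birk tq j (rq * Int.fract (u + m*tq)) := by
  obtain ⟨e1, p, hp⟩ := Nblk_birk m u h0 h1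
  rw [birk_add, e1, hp, birk_intCast_add]

lemma circf_fract_orbit (u : ℝ) (m : ℕ) :
    circf (Int.fract (u + m*tq)) = circf (u + m*tq) := by
  have : u + m*tq = Int.fract (u + m*tq) + (⌊u + m*tq⌋ : ℤ) := by rw [Int.fract]; ring
  conv_rhs => rw [this]
  rw [circf_intCast_add]

/-- Key renormalization equivalence. -/
lemma renorm_birk {u : ℝ} (h0 : 0 ≤ u) (h1 : u < 1) :
    (∀ n : ℕ, 1 ≤ n → 0 ≤ birk tq n (rq*u)) ↔ (∀ m : ℕ, 1 ≤ m → 0 ≤ birk tq m u) := by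
  constructor
  · intro h m hm
    have h5 := Nblk_ge m u
    have := birk_prefix u m 0 h0 h1
    simp only [birk_zero, add_zero, Nat.add_zero] at this
    rw [← this]
    exact h _ (by omega)
  · intro h n hn
    have h' : ∀ m : ℕ, 0 ≤ birk tq m u := by
      intro m
      rcases Nat.eq_zero_or_pos m with h0 | h0
      · simp [h0, birk_zero]
      · exact h m h0
    obtain ⟨m, j, hmj, hj⟩ := decomp n u h0 h1
    set um := Int.fract (u + m*tq) with hum
    have hum0 : 0 ≤ um := Int.fract_nonneg _
    have hum1 : um < 1 := Int.fract_lt_one _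
    obtain ⟨_, b2, _⟩ := block hum0 hum1
    have hpre := birk_prefix u m j h0 h1
    have hcf : circf um = birk tq (m+1) u - birk tq m u := by
      rw [birk_succ, hum, circf_fract_orbit]; ring
    have hmin : min 0 (circf um) ≤ birk tq j (rq*um) := b2 j hj.le
    rw [hmj, hpre]
    rcases le_total 0 (circf um) with hc | hc
    · have := min_eq_left hc ▸ hmin
      have := h' m
      linarith [min_le_left (0:ℝ) (circf um), hmin, h' m]
    · have h2 : min 0 (circf um) = circf um := min_eq_right hc
      rw [h2] at hmin
      have h3 := h' (m+1)
      rw [hcf] at hmin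
      linarith

end Renorm
section Coding

lemma rq_lt_one : rq < 1 := by have := rq_ub; linarith
lemma tq_half : tq < 1/2 := by have := tq_ub; linarith
lemma tq_lt_one : tq < 1 := by have := tq_ub; linarith

noncomputable def cmap (a : ℕ → Fin 3) : ℝ := ∑' n, ((a n : ℕ) : ℝ) * rq^(n+1)

lemma cmap_term_le (a : ℕ → Fin 3) (n : ℕ) :
    ((a n : ℕ) : ℝ) * rq^(n+1) ≤ 2 * rq^(n+1) := by
  have h : ((a n : ℕ) : ℝ) ≤ 2 := by
    have := (a n).2
    have : (a n : ℕ) ≤ 2 := by omega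
    exact_mod_cast this
  have := pow_nonneg rq_pos.le (n+1)
  nlinarith

lemma cmap_term_nonneg (a : ℕ → Fin 3) (n : ℕ) :
    0 ≤ ((a n : ℕ) : ℝ) * rq^(n+1) :=
  mul_nonneg (by positivity) (pow_nonneg rq_pos.le _)

lemma summable_geo2 : Summable (fun n : ℕ => 2 * rq^(n+1)) := by
  have h : Summable (fun n : ℕ => rq^n) :=
    summable_geometric_of_lt_one rq_pos.le rq_lt_one
  simpa [pow_succ, mul_comm, mul_assoc, mul_left_comm] using (h.mul_left (2*rq))

lemma summable_cmap (a : ℕ → Fin 3) :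
    Summable (fun n => ((a n : ℕ) : ℝ) * rq^(n+1)) :=
  Summable.of_nonneg_of_le (cmap_term_nonneg a) (cmap_term_le a) summable_geo2

lemma tsum_geo2 : ∑' n : ℕ, 2 * rq^(n+1) = tq := by
  have h : ∑' n : ℕ, rq^n = (1 - rq)⁻¹ := tsum_geometric_of_lt_one rq_pos.le rq_lt_one
  have h2 : ∑' n : ℕ, 2 * rq^(n+1) = (2*rq) * ∑' n : ℕ, rq^n := by
    rw [← tsum_mul_left]
    congr 1; funext n; ring
  rw [h2, h]
  have hne : (1:ℝ) - rq ≠ 0 := by have := rq_lt_one; linarith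
  field_simp
  linear_combination rq_tq

lemma cmap_nonneg (a : ℕ → Fin 3) : 0 ≤ cmap a :=
  tsum_nonneg (cmap_term_nonneg a)

lemma cmap_le_tq (a : ℕ → Fin 3) : cmap a ≤ tq := by
  rw [← tsum_geo2]
  exact Summable.tsum_le_tsum (cmap_term_le a) (summable_cmap a) summable_geo2

lemma cmap_succ (a : ℕ → Fin 3) :
    cmap a = rq * cmap (fun n => a (n+1)) + ((a 0 : ℕ) : ℝ) * rq := by
  have h := Summable.tsum_eq_zero_add (summable_cmap a)
  rw [cmap, h, cmap]
  have h2 : rq * ∑' n, ((a (n+1) : ℕ) : ℝ) * rq^(n+1)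
      = ∑' n, ((a (n+1) : ℕ) : ℝ) * rq^(n+1+1) := by
    rw [← tsum_mul_left]
    congr 1; funext n; ring
  rw [h2]
  rw [add_comm]
  norm_num

/-- The core estimate: if all renormalized Birkhoff sums below `n'` are nonneg,
then the Birkhoff sum of length `n'` at `rq*u` is nonneg. -/
lemma core {u : ℝ} (h0 : 0 ≤ u) (h1 : u ≤ tq) (n' : ℕ)
    (hb : ∀ m, m < n' → 0 ≤ birk tq m u) : 0 ≤ birk tq n' (rq*u) := by
  have hu1 : u < 1 := lt_of_le_of_lt h1 tq_lt_one
  obtain ⟨m, j, hmj, hj⟩ := decomp n' u h0 hu1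
  have hpre := birk_prefix u m j h0 hu1
  set um := Int.fract (u + m*tq) with hum
  have hum0 : 0 ≤ um := Int.fract_nonneg _
  have hum1 : um < 1 := Int.fract_lt_one _
  obtain ⟨_, b2, _⟩ := block hum0 hum1
  have hmin : min 0 (circf um) ≤ birk tq j (rq*um) := b2 j hj.le
  rcases Nat.eq_zero_or_pos m with hm0 | hm0
  · subst hm0
    have hfr : um = u := by
      rw [hum]; push_cast; rw [zero_mul, add_zero]
      exact Int.fract_eq_self.2 ⟨h0, hu1⟩
    have hc : circf u = 1 := circf_pos 0 (by push_cast; linarith)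
      (by push_cast; have := tq_half; linarith)
    rw [hmj, hpre, birk_zero, zero_add, hfr]
    rw [hfr, hc] at hmin
    simpa using hmin
  · have h5 : 5*m ≤ Nblk m u := Nblk_ge m u
    have hmn : m < n' := by omega
    have hmn' : m + 1 < n' ∨ m + 1 = n' ∨ j = 0 := by omega
    have hcf : circf um = birk tq (m+1) u - birk tq m u := by
      rw [birk_succ, hum, circf_fract_orbit]; ring
    rcases Nat.eq_zero_or_pos j with hj0 | hj0
    · subst hj0
      rw [hmj, hpre, birk_zero, add_zero]
      exact hb m hmn
    · have hm1 : m + 1 < n' := by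
        rcases hmn' with h | h | h
        · exact h
        · omega
        · omega
      have h1' := hb m hmn
      have h2' := hb (m+1) hm1
      rw [hmj, hpre]
      rcases le_total 0 (circf um) with hc | hc
      · have := min_eq_left hc ▸ hmin
        linarith [min_le_left (0:ℝ) (circf um)]
      · rw [min_eq_right hc, hcf] at hmin
        linarith

lemma circf_le_one (x : ℝ) : circf x ≤ 1 := by
  unfold circf; split <;> norm_num

theorem forward : ∀ n : ℕ, ∀ a : ℕ → Fin 3, 0 ≤ birk tq n (cmap a) := by
  intro n
  induction n using Nat.strong_induction_on with
  | _ n ih =>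
    intro a
    set u := cmap (fun i => a (i+1)) with hu
    have h0 : 0 ≤ u := cmap_nonneg _
    have h1 : u ≤ tq := cmap_le_tq _
    have hz : cmap a = rq*u + ((a 0 : ℕ) : ℝ) * rq := cmap_succ a
    set y := rq * u with hy
    have hy0 : 0 ≤ y := mul_nonneg rq_pos.le h0
    have hyu : y ≤ rq * tq := mul_le_mul_of_nonneg_left h1 rq_pos.le
    have hyu' : y ≤ 0.0711 := by
      have h2 := rq_ub; have h3 := tq_ub
      nlinarith [rq_pos, tq_pos]
    have ht1 := tq_lb; have ht2 := tq_ub; have hr1 := rq_lb; have hr2 := rq_ub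
    have hcore : ∀ n'' , n'' ≤ n → 0 ≤ birk tq n'' y := by
      intro n'' hn''
      exact core h0 h1 n'' (fun m hm => ih m (by omega) _)
    have hk : (a 0 : ℕ) < 3 := (a 0).2
    have cm1 : circf (y - tq) = -1 := circf_neg (-1) (by push_cast; linarith) (by push_cast; linarith)
    have cm2 : circf (y - 2*tq) = 1 := circf_pos (-1) (by push_cast; linarith) (by push_cast; linarith)
    interval_cases h : (a 0 : ℕ)
    · have he : cmap a = y := by rw [hz]; norm_num
      rw [he]
      exact hcore n le_rfl
    · -- digit 1 : cmap a = y + rq = (y - 2θ) + 1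
      have he : cmap a = (y - 2*tq) + ((1:ℤ):ℝ) := by
        rw [hz, rq_def]; push_cast; ring
      rw [he, birk_intCast_add]
      rcases n with _ | n1
      · simp [birk_zero]
      rcases n1 with _ | n2
      · rw [birk_one, cm2]; norm_num
      · have hsplit : birk tq (n2 + 1 + 1) (y - 2*tq)
            = birk tq 2 (y - 2*tq) + birk tq n2 ((y - 2*tq) + 2*tq) := by
          rw [show n2 + 1 + 1 = 2 + n2 by ring, birk_add]
          norm_num
        have hb2 : birk tq 2 (y - 2*tq) = 0 := by
          simp [birk, Finset.sum_range_succ]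
          rw [show y - 2*tq + tq = y - tq by ring]
          rw [cm1, cm2]  -- order?
          ring
        rw [hsplit, hb2, show y - 2*tq + 2*tq = y by ring, zero_add]
        exact hcore n2 (by omega)
    · -- digit 2 : cmap a = y + 2rq = (y - 4θ) + 2
      have cm3 : circf (y - 3*tq) = -1 :=
        circf_neg (-2) (by push_cast; linarith) (by push_cast; linarith)
      have cm4 : circf (y - 4*tq) = 1 :=
        circf_pos (-2) (by push_cast; linarith) (by push_cast; linarith)
      have he : cmap a = (y - 4*tq) + ((2:ℤ):ℝ) := by
        rw [hz, rq_def]; push_cast; ring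
      rw [he, birk_intCast_add]
      rcases n with _ | n1
      · simp [birk_zero]
      rcases n1 with _ | n2
      · rw [birk_one, cm4]; norm_num
      rcases n2 with _ | n3
      · simp [birk, Finset.sum_range_succ]
        rw [show y - 4*tq + tq = y - 3*tq by ring, cm3, cm4]
        norm_num
      rcases n3 with _ | n4
      · simp [birk, Finset.sum_range_succ]
        rw [show y - 4*tq + tq = y - 3*tq by ring,
            show y - 4*tq + 2*tq = y - 2*tq by ring, cm2, cm3, cm4]
        norm_num
      · have hsplit : birk tq (n4 + 1 + 1 + 1 + 1) (y - 4*tq)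
            = birk tq 4 (y - 4*tq) + birk tq n4 ((y - 4*tq) + 4*tq) := by
          rw [show n4 + 1 + 1 + 1 + 1 = 4 + n4 by ring, birk_add]
          norm_num
        have hb4 : birk tq 4 (y - 4*tq) = 0 := by
          simp [birk, Finset.sum_range_succ]
          rw [show y - 4*tq + tq = y - 3*tq by ring,
              show y - 4*tq + 2*tq = y - 2*tq by ring,
              show y - 4*tq + 3*tq = y - tq by ring, cm1, cm2, cm3, cm4]
          ring
        rw [hsplit, hb4, show y - 4*tq + 4*tq = y by ring, zero_add]
        exact hcore n4 (by omega)

end Coding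
section Backward

lemma heavy_bounds {z : ℝ} (hz : z ∈ heavy tq) : 0 ≤ z ∧ z ≤ 1/2 := by
  obtain ⟨⟨h0, h1⟩, hb⟩ := hz
  refine ⟨h0, ?_⟩
  have hb1 := hb 1 le_rfl
  rw [birk_one, circf_of_Ico h0 h1] at hb1
  by_contra hc
  rw [if_neg (by linarith)] at hb1
  linarith

lemma heavy_step {z : ℝ} (hz : z ∈ heavy tq) :
    ∃ (k : Fin 3) (u : ℝ), u ∈ heavy tq ∧ z = rq*u + (k : ℕ)*rq := by
  obtain ⟨h0, hhalf⟩ := heavy_bounds hz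
  obtain ⟨⟨_, hz1⟩, hb⟩ := hz
  have ht1 := tq_lb; have ht2 := tq_ub; have hr1 := rq_lb; have hr2 := rq_ub
  -- choose the digit k and y := z - k*rq ∈ [0, rq)
  obtain ⟨k, hk3, hy0, hy1, hyheavy⟩ :
      ∃ k : ℕ, k < 3 ∧ 0 ≤ z - k*rq ∧ z - k*rq < rq ∧
        (∀ n : ℕ, 1 ≤ n → 0 ≤ birk tq n (z - k*rq)) := by
    rcases lt_or_ge z rq with h | h
    · exact ⟨0, by norm_num, by push_cast; linarith, by push_cast; linarith,
        by intro n hn; push_cast; rw [zero_mul, sub_zero]; exact hb n hn⟩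
    · rcases lt_or_ge z (2*rq) with h2 | h2
      · -- k = 1
        refine ⟨1, by norm_num, by push_cast; linarith, by push_cast; linarith, ?_⟩
        intro n _
        push_cast
        set y := z - 1*rq with hyd
        have hyr : 0 ≤ y ∧ y < rq := ⟨by rw [hyd]; linarith, by rw [hyd]; linarith⟩
        have cm1 : circf (y - tq) = -1 :=
          circf_neg (-1) (by push_cast; linarith [hyr.1, hyr.2]) (by push_cast; linarith [hyr.1, hyr.2])
        have cm2 : circf (y - 2*tq) = 1 :=
          circf_pos (-1) (by push_cast; linarith [hyr.1, hyr.2]) (by push_cast; linarith [hyr.1, hyr.2])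
        have hze : z = (y - 2*tq) + ((1:ℤ):ℝ) := by rw [hyd, rq_def]; push_cast; ring
        have key : birk tq (n+2) z = birk tq n y := by
          rw [hze, birk_intCast_add,
            show n + 2 = 2 + n by ring, birk_add]
          have hb2 : birk tq 2 (y - 2*tq) = 0 := by
            simp [birk, Finset.sum_range_succ]
            rw [show y - 2*tq + tq = y - tq by ring, cm1, cm2]
            ring
          rw [hb2, show y - 2*tq + (2:ℕ)*tq = y by push_cast; ring, zero_add]
        have := hb (n+2) (by omega)
        rw [key] at this
        exact this
      · -- k = 2
        refine ⟨2, by norm_num, by push_cast; linarith, by push_cast; linarith, ?_⟩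
        intro n _
        push_cast
        set y := z - 2*rq with hyd
        have hyr : 0 ≤ y ∧ y < rq := ⟨by rw [hyd]; linarith, by rw [hyd]; linarith⟩
        have cm1 : circf (y - tq) = -1 :=
          circf_neg (-1) (by push_cast; linarith [hyr.1, hyr.2]) (by push_cast; linarith [hyr.1, hyr.2])
        have cm2 : circf (y - 2*tq) = 1 :=
          circf_pos (-1) (by push_cast; linarith [hyr.1, hyr.2]) (by push_cast; linarith [hyr.1, hyr.2])
        have cm3 : circf (y - 3*tq) = -1 :=
          circf_neg (-2) (by push_cast; linarith [hyr.1, hyr.2]) (by push_cast; linarith [hyr.1, hyr.2])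
        have hc4 : circf (y - 4*tq) ≤ 1 := circf_le_one _
        have hze : z = (y - 4*tq) + ((2:ℤ):ℝ) := by rw [hyd, rq_def]; push_cast; ring
        have key : birk tq (n+4) z = birk tq 4 (y - 4*tq) + birk tq n y := by
          rw [hze, birk_intCast_add, show n + 4 = 4 + n by ring, birk_add]
          rw [show y - 4*tq + (4:ℕ)*tq = y by push_cast; ring]
        have hb4 : birk tq 4 (y - 4*tq) ≤ 0 := by
          simp [birk, Finset.sum_range_succ]
          rw [show y - 4*tq + tq = y - 3*tq by ring,
              show y - 4*tq + 2*tq = y - 2*tq by ring,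
              show y - 4*tq + 3*tq = y - tq by ring, cm1, cm2, cm3]
          linarith
        have := hb (n+4) (by omega)
        rw [key] at this
        linarith
  -- now renormalize y = rq * u
  set y := z - k*rq with hyd
  set u := y / rq with hud
  have hru : rq * u = y := by rw [hud]; field_simp
  have hu0 : 0 ≤ u := div_nonneg hy0 rq_pos.le
  have hu1 : u < 1 := by
    rw [hud, div_lt_one rq_pos]; exact hy1
  have huheavy : ∀ m : ℕ, 1 ≤ m → 0 ≤ birk tq m u := by
    apply (renorm_birk hu0 hu1).1
    intro n hn
    rw [hru]
    exact hyheavy n hn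
  exact ⟨⟨k, hk3⟩, u, ⟨⟨hu0, hu1⟩, huheavy⟩, by rw [hru, hyd]; push_cast; ring⟩

/-- iterated digit extraction -/
noncomputable def nxt (w : {w : ℝ // w ∈ heavy tq}) : (Fin 3) × {w : ℝ // w ∈ heavy tq} :=
  ⟨(heavy_step w.2).choose, ⟨(heavy_step w.2).choose_spec.choose,
    (heavy_step w.2).choose_spec.choose_spec.1⟩⟩

lemma nxt_spec (w : {w : ℝ // w ∈ heavy tq}) :
    (w : ℝ) = rq * ((nxt w).2 : ℝ) + (((nxt w).1 : ℕ) : ℝ) * rq :=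
  (heavy_step w.2).choose_spec.choose_spec.2

noncomputable def seqs (w0 : {w : ℝ // w ∈ heavy tq}) (n : ℕ) : {w : ℝ // w ∈ heavy tq} :=
  (fun w => (nxt w).2)^[n] w0

noncomputable def digs (w0 : {w : ℝ // w ∈ heavy tq}) (n : ℕ) : Fin 3 :=
  (nxt (seqs w0 n)).1

lemma seqs_succ (w0 : {w : ℝ // w ∈ heavy tq}) (n : ℕ) :
    seqs w0 (n+1) = (nxt (seqs w0 n)).2 := by
  rw [seqs, Function.iterate_succ_apply', seqs]

lemma partial_sum (w0 : {w : ℝ // w ∈ heavy tq}) (n : ℕ) :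
    (w0 : ℝ) = (∑ i ∈ Finset.range n, ((digs w0 i : ℕ) : ℝ) * rq^(i+1))
      + rq^n * (seqs w0 n : ℝ) := by
  induction n with
  | zero => simp [seqs]
  | succ n ih =>
    rw [ih, Finset.sum_range_succ]
    have h := nxt_spec (seqs w0 n)
    rw [seqs_succ, digs]
    rw [h]
    ring

theorem heavy_eq_range : heavy tq = Set.range cmap := by
  ext z
  constructor
  · intro hz
    refine ⟨digs ⟨z, hz⟩, ?_⟩
    have hsum := (summable_cmap (digs ⟨z, hz⟩)).hasSum.tendsto_sum_nat
    have h2 : Filter.Tendsto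
        (fun n => ∑ i ∈ Finset.range n, ((digs ⟨z, hz⟩ i : ℕ) : ℝ) * rq^(i+1))
        Filter.atTop (nhds z) := by
      have heq : ∀ n, ∑ i ∈ Finset.range n, ((digs ⟨z, hz⟩ i : ℕ) : ℝ) * rq^(i+1)
          = z - rq^n * ((seqs ⟨z, hz⟩ n : ℝ)) := by
        intro n
        have := partial_sum ⟨z, hz⟩ n
        simp only [Subtype.coe_mk] at this
        linarith
      rw [show nhds z = nhds (z - 0) by norm_num]
      refine Filter.Tendsto.congr (fun n => (heq n).symm) (Filter.Tendsto.const_sub _ ?_)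
      have hb : ∀ n : ℕ, |rq^n * ((seqs ⟨z, hz⟩ n : ℝ))| ≤ rq^n := by
        intro n
        obtain ⟨⟨hw0, hw1⟩, _⟩ := (seqs ⟨z, hz⟩ n).2
        rw [abs_of_nonneg (mul_nonneg (pow_nonneg rq_pos.le n) hw0)]
        nlinarith [pow_nonneg rq_pos.le n]
      have hgeo : Filter.Tendsto (fun n : ℕ => rq^n) Filter.atTop (nhds 0) :=
        tendsto_pow_atTop_nhds_zero_of_lt_one rq_pos.le rq_lt_one
      exact squeeze_zero_norm hb hgeo
    exact tendsto_nhds_unique hsum h2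
  · rintro ⟨a, rfl⟩
    refine ⟨⟨cmap_nonneg a, lt_of_le_of_lt (cmap_le_tq a) tq_lt_one⟩, ?_⟩
    intro n _
    exact forward n a

end Backward
section Qmap

noncomputable def qmap (q : ℝ) (a : ℕ → Fin 3) : ℝ := ∑' n, ((a n : ℕ) : ℝ) * q^(n+1)

variable {q : ℝ}

lemma qterm_le (hq0 : 0 ≤ q) (a : ℕ → Fin 3) (n : ℕ) :
    ((a n : ℕ) : ℝ) * q^(n+1) ≤ 2 * q^(n+1) := by
  have h : ((a n : ℕ) : ℝ) ≤ 2 := by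
    have := (a n).2
    have : (a n : ℕ) ≤ 2 := by omega
    exact_mod_cast this
  have := pow_nonneg hq0 (n+1)
  nlinarith

lemma qterm_nonneg (hq0 : 0 ≤ q) (a : ℕ → Fin 3) (n : ℕ) :
    0 ≤ ((a n : ℕ) : ℝ) * q^(n+1) :=
  mul_nonneg (by positivity) (pow_nonneg hq0 _)

lemma qsummable_geo2 (hq0 : 0 ≤ q) (hq1 : q < 1) : Summable (fun n : ℕ => 2 * q^(n+1)) := by
  have h : Summable (fun n : ℕ => q^n) := summable_geometric_of_lt_one hq0 hq1
  simpa [pow_succ, mul_comm, mul_assoc, mul_left_comm] using (h.mul_left (2*q))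

lemma qsummable (hq0 : 0 ≤ q) (hq1 : q < 1) (a : ℕ → Fin 3) :
    Summable (fun n => ((a n : ℕ) : ℝ) * q^(n+1)) :=
  Summable.of_nonneg_of_le (qterm_nonneg hq0 a) (qterm_le hq0 a) (qsummable_geo2 hq0 hq1)

lemma qtsum_geo2 (hq0 : 0 ≤ q) (hq1 : q < 1) :
    ∑' n : ℕ, 2 * q^(n+1) = 2*q/(1-q) := by
  have h : ∑' n : ℕ, q^n = (1 - q)⁻¹ := tsum_geometric_of_lt_one hq0 hq1
  have h2 : ∑' n : ℕ, 2 * q^(n+1) = (2*q) * ∑' n : ℕ, q^n := by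
    rw [← tsum_mul_left]; congr 1; funext n; ring
  rw [h2, h, div_eq_mul_inv]

lemma qmap_nonneg (hq0 : 0 ≤ q) (a : ℕ → Fin 3) : 0 ≤ qmap q a :=
  tsum_nonneg (qterm_nonneg hq0 a)

lemma qmap_le (hq0 : 0 ≤ q) (hq1 : q < 1) (a : ℕ → Fin 3) : qmap q a ≤ 2*q/(1-q) := by
  rw [← qtsum_geo2 hq0 hq1]
  exact Summable.tsum_le_tsum (qterm_le hq0 a) (qsummable hq0 hq1 a) (qsummable_geo2 hq0 hq1)

lemma qmap_succ (hq0 : 0 ≤ q) (hq1 : q < 1) (a : ℕ → Fin 3) :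
    qmap q a = q * qmap q (fun n => a (n+1)) + ((a 0 : ℕ) : ℝ) * q := by
  have h := Summable.tsum_eq_zero_add (qsummable hq0 hq1 a)
  rw [qmap, h, qmap]
  have h2 : q * ∑' n, ((a (n+1) : ℕ) : ℝ) * q^(n+1)
      = ∑' n, ((a (n+1) : ℕ) : ℝ) * q^(n+1+1) := by
    rw [← tsum_mul_left]; congr 1; funext n; ring
  rw [h2, add_comm]
  norm_num

lemma qmap_split (hq0 : 0 ≤ q) (hq1 : q < 1) (a : ℕ → Fin 3) (n : ℕ) :
    qmap q a = (∑ i ∈ Finset.range n, ((a i : ℕ) : ℝ) * q^(i+1))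
      + q^n * qmap q (fun m => a (m+n)) := by
  induction n generalizing a with
  | zero => simp
  | succ n ih =>
    rw [qmap_succ hq0 hq1 a, ih (fun i => a (i+1)), Finset.sum_range_succ']
    beta_reduce
    rw [show (fun m => a (m + (n+1))) = (fun m => a (m + n + 1)) from rfl]
    rw [mul_add, Finset.mul_sum]
    rw [Finset.sum_congr rfl (fun (i : ℕ) (_ : i ∈ Finset.range n) =>
      (by ring : q * (((a (i+1) : ℕ):ℝ) * q^(i+1)) = ((a (i+1):ℕ):ℝ) * q^(i+1+1)))]
    push_cast
    ring

lemma cmap_eq_qmap (a : ℕ → Fin 3) : cmap a = qmap rq a := rfl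

noncomputable def gmap (a : ℕ → Fin 3) : ℝ := qmap (1/3) a

lemma gmap_mem (a : ℕ → Fin 3) : 0 ≤ gmap a ∧ gmap a ≤ 1 := by
  refine ⟨qmap_nonneg (by norm_num) a, ?_⟩
  have := qmap_le (q := 1/3) (by norm_num) (by norm_num) a
  norm_num at this
  exact this

lemma fin3_dist {c d : Fin 3} (h : c ≠ d) : 1 ≤ |((c : ℕ) : ℝ) - ((d : ℕ) : ℝ)| := by
  have hne : (c : ℕ) ≠ (d : ℕ) := fun hc => h (Fin.ext hc)
  have hne' : ((c : ℕ) : ℤ) ≠ ((d : ℕ) : ℤ) := by exact_mod_cast hne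
  have h1 : (1:ℤ) ≤ |((c : ℕ) : ℤ) - ((d : ℕ) : ℤ)| := by
    rcases abs_cases (((c : ℕ) : ℤ) - ((d : ℕ) : ℤ)) with ⟨he, _⟩ | ⟨he, _⟩ <;> omega
  have h2 : ((1:ℤ):ℝ) ≤ ((|((c : ℕ) : ℤ) - ((d : ℕ) : ℤ)| : ℤ) : ℝ) := by exact_mod_cast h1
  push_cast at h2
  exact h2

lemma cmap_sep0 {a b : ℕ → Fin 3} (h : a 0 ≠ b 0) :
    rq * (1 - tq) ≤ |cmap a - cmap b| := by
  have e1 := cmap_succ a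
  have e2 := cmap_succ b
  set A := cmap (fun n => a (n+1)) with hA
  set B := cmap (fun n => b (n+1)) with hB
  have hA0 : 0 ≤ A := cmap_nonneg _
  have hA1 : A ≤ tq := cmap_le_tq _
  have hB0 : 0 ≤ B := cmap_nonneg _
  have hB1 : B ≤ tq := cmap_le_tq _
  have hd := fin3_dist h
  have habs : |A - B| ≤ tq := abs_le.2 ⟨by linarith, by linarith⟩
  have t : |(((a 0 : ℕ):ℝ) - ((b 0 : ℕ):ℝ))*rq| - |(-(rq*(A-B)))|
      ≤ |(((a 0 : ℕ):ℝ) - ((b 0 : ℕ):ℝ))*rq - (-(rq*(A-B)))| :=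
    abs_sub_abs_le_abs_sub _ _
  rw [abs_neg] at t
  have harg : (((a 0 : ℕ):ℝ) - ((b 0 : ℕ):ℝ))*rq - (-(rq*(A-B))) = cmap a - cmap b := by
    rw [e1, e2]; ring
  rw [harg] at t
  have m1 : |(((a 0 : ℕ):ℝ) - ((b 0 : ℕ):ℝ))*rq| = |((a 0 : ℕ):ℝ) - ((b 0 : ℕ):ℝ)| * rq := by
    rw [abs_mul, abs_of_nonneg rq_pos.le]
  have m2 : |rq*(A-B)| = rq * |A-B| := by
    rw [abs_mul, abs_of_nonneg rq_pos.le]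
  rw [m1, m2] at t
  have m3 : 1 * rq ≤ |((a 0 : ℕ):ℝ) - ((b 0 : ℕ):ℝ)| * rq :=
    mul_le_mul_of_nonneg_right hd rq_pos.le
  have m4 : rq * |A-B| ≤ rq * tq := mul_le_mul_of_nonneg_left habs rq_pos.le
  nlinarith

lemma first_diff {a b : ℕ → Fin 3} (h : a ≠ b) :
    ∃ n, (∀ m, m < n → a m = b m) ∧ a n ≠ b n := by
  classical
  have hex : ∃ n, a n ≠ b n := Function.ne_iff.1 h
  refine ⟨Nat.find hex, fun m hm => ?_, Nat.find_spec hex⟩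
  by_contra hc
  exact (Nat.find_min hex hm) hc

lemma cmap_gmap_sep {a b : ℕ → Fin 3} (h : a ≠ b) :
    ∃ n : ℕ, rq * (1 - tq) * rq^n ≤ |cmap a - cmap b| ∧
      |gmap a - gmap b| ≤ (1/3:ℝ)^n := by
  obtain ⟨n, hpre, hne⟩ := first_diff h
  have hprs : ∀ i ∈ Finset.range n, ((a i : ℕ) : ℝ) * rq^(i+1) = ((b i : ℕ) : ℝ) * rq^(i+1) := by
    intro i hi
    rw [hpre i (Finset.mem_range.1 hi)]
  have hprs3 : ∀ i ∈ Finset.range n, ((a i : ℕ) : ℝ) * (1/3:ℝ)^(i+1) = ((b i : ℕ) : ℝ) * (1/3:ℝ)^(i+1) := by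
    intro i hi
    rw [hpre i (Finset.mem_range.1 hi)]
  refine ⟨n, ?_, ?_⟩
  · have s1 := qmap_split rq_pos.le rq_lt_one a n
    have s2 := qmap_split rq_pos.le rq_lt_one b n
    rw [← cmap_eq_qmap] at s1 s2
    have hdiff : cmap a - cmap b
        = rq^n * (qmap rq (fun m => a (m+n)) - qmap rq (fun m => b (m+n))) := by
      rw [s1, s2, Finset.sum_congr rfl hprs]
      ring
    have hsep := cmap_sep0 (a := fun m => a (m+n)) (b := fun m => b (m+n))
      (by simpa using hne)
    rw [hdiff, abs_mul, abs_of_nonneg (pow_nonneg rq_pos.le n)]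
    rw [← cmap_eq_qmap, ← cmap_eq_qmap]
    calc rq * (1-tq) * rq^n = rq^n * (rq*(1-tq)) := by ring
    _ ≤ rq^n * |cmap (fun m => a (m+n)) - cmap (fun m => b (m+n))| :=
        mul_le_mul_of_nonneg_left hsep (pow_nonneg rq_pos.le n)
  · have s1 := qmap_split (q := 1/3) (by norm_num) (by norm_num) a n
    have s2 := qmap_split (q := 1/3) (by norm_num) (by norm_num) b n
    have hdiff : gmap a - gmap b
        = (1/3:ℝ)^n * (qmap (1/3) (fun m => a (m+n)) - qmap (1/3) (fun m => b (m+n))) := by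
      rw [gmap, gmap, s1, s2, Finset.sum_congr rfl hprs3]
      ring
    have h1 := gmap_mem (fun m => a (m+n))
    have h2 := gmap_mem (fun m => b (m+n))
    rw [gmap] at h1 h2
    rw [hdiff, abs_mul, abs_of_nonneg (pow_nonneg (by norm_num : (0:ℝ) ≤ 1/3) n)]
    have : |qmap (1/3) (fun m => a (m+n)) - qmap (1/3) (fun m => b (m+n))| ≤ 1 :=
      abs_le.2 ⟨by linarith [h1.1, h2.2], by linarith [h1.2, h2.1]⟩
    calc (1/3:ℝ)^n * |qmap (1/3) (fun m => a (m+n)) - qmap (1/3) (fun m => b (m+n))|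
        ≤ (1/3:ℝ)^n * 1 := mul_le_mul_of_nonneg_left this (by positivity)
    _ = (1/3:ℝ)^n := by ring

lemma cmap_inj : Function.Injective cmap := by
  intro a b hab
  by_contra h
  obtain ⟨n, h1, _⟩ := cmap_gmap_sep h
  rw [hab, sub_self, abs_zero] at h1
  have h3 : 0 < 1 - tq := by have := tq_lt_one; linarith
  have h2 : 0 < rq * (1-tq) * rq^n := mul_pos (mul_pos rq_pos h3) (pow_pos rq_pos n)
  linarith

end Qmap
section Ternary

lemma floor3_lb (t : ℝ) : 3 * ⌊t⌋ ≤ ⌊3*t⌋ := by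
  apply Int.le_floor.2
  push_cast
  nlinarith [Int.floor_le t]

lemma floor3_ub (t : ℝ) : ⌊3*t⌋ ≤ 3*⌊t⌋ + 2 := by
  have h : ⌊3*t⌋ < 3*⌊t⌋ + 3 := by
    apply Int.floor_lt.2
    push_cast
    nlinarith [Int.lt_floor_add_one t]
  omega

lemma ternary_exists {x : ℝ} (hx0 : 0 ≤ x) (hx1 : x < 1) :
    ∃ a : ℕ → Fin 3, gmap a = x := by
  set F : ℕ → ℤ := fun n => ⌊x * 3^n⌋ with hF
  have hF0 : F 0 = 0 := by
    simp [hF, Int.floor_eq_zero_iff, Set.mem_Ico]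
    constructor <;> [exact hx0; exact hx1]
  have hkey : ∀ n, 3 * F n ≤ F (n+1) ∧ F (n+1) ≤ 3 * F n + 2 := by
    intro n
    have h1 := floor3_lb (x * 3^n)
    have h2 := floor3_ub (x * 3^n)
    rw [show 3 * (x * 3^n) = x * 3^(n+1) by ring] at h1 h2
    exact ⟨h1, h2⟩
  have hdig : ∀ n, (F (n+1) - 3 * F n).toNat < 3 := by
    intro n
    have := hkey n
    omega
  set a : ℕ → Fin 3 := fun n => ⟨(F (n+1) - 3 * F n).toNat, hdig n⟩ with ha
  have hterm : ∀ n, ((a n : ℕ) : ℝ) = (F (n+1) : ℝ) - 3 * (F n : ℝ) := by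
    intro n
    have h := (hkey n).1
    have hnn : (0:ℤ) ≤ F (n+1) - 3*F n := by omega
    have h3 : ((F (n+1) - 3*F n).toNat : ℤ) = F (n+1) - 3*F n := Int.toNat_of_nonneg hnn
    show (((F (n+1) - 3*F n).toNat : ℕ) : ℝ) = _
    rw [show (((F (n+1) - 3*F n).toNat : ℕ) : ℝ) = (((F (n+1) - 3*F n).toNat : ℤ) : ℝ) by
      push_cast; ring, h3]
    push_cast
    ring
  have hpartial : ∀ n, ∑ i ∈ Finset.range n, ((a i : ℕ) : ℝ) * (1/3:ℝ)^(i+1)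
      = (F n : ℝ) / 3^n := by
    intro n
    induction n with
    | zero => simp [hF0]
    | succ n ih =>
      rw [Finset.sum_range_succ, ih, hterm n]
      simp only [one_div, inv_pow]
      field_simp
      ring
  refine ⟨a, ?_⟩
  have hsum := (qsummable (q := 1/3) (by norm_num) (by norm_num) a).hasSum.tendsto_sum_nat
  have h2 : Filter.Tendsto (fun n => ∑ i ∈ Finset.range n, ((a i : ℕ) : ℝ) * (1/3:ℝ)^(i+1))
      Filter.atTop (nhds x) := by
    have heq : ∀ n : ℕ, ∑ i ∈ Finset.range n, ((a i : ℕ) : ℝ) * (1/3:ℝ)^(i+1)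
        = x - (x - (F n : ℝ)/3^n) := by
      intro n; rw [hpartial n]; ring
    rw [show nhds x = nhds (x - 0) by norm_num]
    refine Filter.Tendsto.congr (fun n => (heq n).symm) (Filter.Tendsto.const_sub _ ?_)
    have hb : ∀ n : ℕ, |x - (F n : ℝ)/3^n| ≤ (1/3:ℝ)^n := by
      intro n
      have h3 : (0:ℝ) < 3^n := by positivity
      have hfl : (F n : ℝ) ≤ x * 3^n := Int.floor_le _
      have hfu : x * 3^n < (F n : ℝ) + 1 := Int.lt_floor_add_one _
      have hnn : 0 ≤ x - (F n : ℝ)/3^n := by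
        have := (div_le_iff₀ h3).2 hfl
        linarith
      have hc : ((F n : ℝ))/3^n * 3^n = (F n : ℝ) := div_mul_cancel₀ _ h3.ne'
      rw [abs_of_nonneg hnn, show (1/3:ℝ)^n = 1/3^n by rw [div_pow, one_pow],
        le_div_iff₀ h3]
      nlinarith [hfu, hc]
    have hgeo : Filter.Tendsto (fun n : ℕ => (1/3:ℝ)^n) Filter.atTop (nhds 0) :=
      tendsto_pow_atTop_nhds_zero_of_lt_one (by norm_num) (by norm_num)
    exact squeeze_zero_norm hb hgeo
  exact tendsto_nhds_unique hsum h2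

lemma gmap_surj : Set.Icc (0:ℝ) 1 ⊆ Set.range gmap := by
  intro x hx
  rcases lt_or_eq_of_le hx.2 with h1 | h1
  · obtain ⟨a, ha⟩ := ternary_exists hx.1 h1
    exact ⟨a, ha⟩
  · refine ⟨fun _ => (2 : Fin 3), ?_⟩
    rw [gmap, qmap]
    have : ∀ n : ℕ, (((2:Fin 3) : ℕ) : ℝ) * (1/3:ℝ)^(n+1) = 2 * (1/3:ℝ)^(n+1) := by
      intro n; norm_num
    rw [tsum_congr this, qtsum_geo2 (by norm_num) (by norm_num)]
    rw [h1]
    norm_num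

end Ternary
section Dimension
open scoped ENNReal NNReal

noncomputable def dd : ℝ := Real.log 3 / Real.log (3 + 2*Real.sqrt 2)

lemma log32_pos : 0 < Real.log (3 + 2*Real.sqrt 2) :=
  Real.log_pos (by nlinarith [Real.sqrt_nonneg 2])

lemma dd_pos : 0 < dd := div_pos (Real.log_pos (by norm_num)) log32_pos

lemma dd_lt_one : dd < 1 := by
  rw [dd, div_lt_one log32_pos]
  apply Real.log_lt_log (by norm_num)
  nlinarith [s2lb]

lemma rq_inv : rq = (3 + 2*Real.sqrt 2)⁻¹ := by
  have hpos : (0:ℝ) < 3 + 2*Real.sqrt 2 := by nlinarith [Real.sqrt_nonneg 2]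
  have hid : rq = 3 - 2*Real.sqrt 2 := by rw [rq_def, tq]; ring
  have h : rq * (3 + 2*Real.sqrt 2) = 1 := by
    rw [hid]; linear_combination (-4:ℝ) * s2sq
  exact eq_inv_of_mul_eq_one_left h

lemma rq_rpow_dd : rq ^ dd = 1/3 := by
  rw [Real.rpow_def_of_pos rq_pos, rq_inv, Real.log_inv]
  have h : dd * Real.log (3 + 2*Real.sqrt 2) = Real.log 3 :=
    div_mul_cancel₀ _ log32_pos.ne'
  rw [show -Real.log (3 + 2*Real.sqrt 2) * dd = -Real.log 3 by rw [← h]; ring]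
  rw [Real.exp_neg, Real.exp_log (by norm_num : (0:ℝ) < 3)]
  norm_num

lemma pow_rq_dd (n : ℕ) : ((rq^n : ℝ))^dd = (1/3:ℝ)^n := by
  rw [← Real.rpow_natCast rq n, ← Real.rpow_mul rq_pos.le, mul_comm,
    Real.rpow_mul rq_pos.le, rq_rpow_dd, Real.rpow_natCast]

lemma two_rq_div : 2*rq/(1-rq) = tq := by
  have h3 : (1:ℝ) - rq = 2*tq := by rw [rq_def]; ring
  have htne : (2:ℝ)*tq ≠ 0 := by have := tq_pos; positivity
  rw [h3, div_eq_iff htne]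
  linear_combination (-2:ℝ)*tq_sq

noncomputable def csum {n : ℕ} (w : Fin n → Fin 3) : ℝ :=
  ∑ i : Fin n, ((w i : ℕ) : ℝ) * rq^((i:ℕ)+1)

lemma qmap_rq_le_tq (b : ℕ → Fin 3) : qmap rq b ≤ tq := by
  have := qmap_le rq_pos.le rq_lt_one b
  rwa [two_rq_div] at this

lemma cover (n : ℕ) :
    Set.range cmap ⊆ ⋃ w : Fin n → Fin 3, Set.Icc (csum w) (csum w + tq * rq^n) := by
  rintro _ ⟨a, rfl⟩
  refine Set.mem_iUnion.2 ⟨fun i => a i, ?_⟩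
  have hs := qmap_split rq_pos.le rq_lt_one a n
  rw [← cmap_eq_qmap] at hs
  have hp : (∑ i ∈ Finset.range n, ((a i : ℕ):ℝ) * rq^(i+1)) = csum (fun i : Fin n => a i) := by
    rw [csum, Finset.sum_range]
  have hT0 : 0 ≤ qmap rq (fun m => a (m+n)) := qmap_nonneg rq_pos.le _
  have hT1 : qmap rq (fun m => a (m+n)) ≤ tq := qmap_rq_le_tq _
  have hrn : (0:ℝ) ≤ rq^n := pow_nonneg rq_pos.le n
  rw [hs, hp]
  constructor
  · nlinarith
  · nlinarith

lemma dimH_upper : dimH (Set.range cmap) ≤ ENNReal.ofReal dd := by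
  rw [ENNReal.ofReal_eq_coe_nnreal dd_pos.le]
  apply dimH_le_of_hausdorffMeasure_ne_top (d := ⟨dd, dd_pos.le⟩)
  have hb := MeasureTheory.Measure.hausdorffMeasure_le_liminf_sum (ι := fun n : ℕ => Fin n → Fin 3)
      dd (Set.range cmap)
      (fun n : ℕ => ENNReal.ofReal (tq * rq^n))
      (by
        have h0 : Filter.Tendsto (fun n : ℕ => tq * rq^n) Filter.atTop (nhds 0) := by
          have h := tendsto_pow_atTop_nhds_zero_of_lt_one rq_pos.le rq_lt_one
          simpa using h.const_mul tq
        have := ENNReal.tendsto_ofReal h0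
        rwa [ENNReal.ofReal_zero] at this)
      (fun n w => Set.Icc (csum w) (csum w + tq * rq^n))
      (Filter.Eventually.of_forall (fun n w => by
        rw [Real.ediam_Icc]
        simp))
      (Filter.Eventually.of_forall cover)
  have hsum : ∀ n : ℕ,
      (∑ w : Fin n → Fin 3,
        Metric.ediam (Set.Icc (csum w) (csum w + tq*rq^n)) ^ dd)
        = ENNReal.ofReal (tq^dd) := by
    intro n
    have hdiam : ∀ w : Fin n → Fin 3,
        Metric.ediam (Set.Icc (csum w) (csum w + tq*rq^n)) = ENNReal.ofReal (tq*rq^n) := by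
      intro w; rw [Real.ediam_Icc]; ring_nf
    rw [Finset.sum_congr rfl (fun w _ => by rw [hdiam w])]
    rw [Finset.sum_const, Finset.card_univ, Fintype.card_fun, Fintype.card_fin,
      Fintype.card_fin]
    have hpos : (0:ℝ) < tq * rq^n := mul_pos tq_pos (pow_pos rq_pos n)
    rw [ENNReal.ofReal_rpow_of_pos hpos, nsmul_eq_mul]
    have hcast : ((3^n : ℕ) : ℝ≥0∞) = ENNReal.ofReal ((3:ℝ)^n) := by
      rw [ENNReal.ofReal_pow (by norm_num : (0:ℝ) ≤ 3)]
      norm_num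
    rw [hcast, ← ENNReal.ofReal_mul (by positivity)]
    congr 1
    have h1 : (tq * rq^n)^dd = tq^dd * (rq^n)^dd :=
      Real.mul_rpow tq_pos.le (pow_nonneg rq_pos.le n)
    rw [h1, pow_rq_dd]
    have h3 : (3:ℝ)^n * (1/3:ℝ)^n = 1 := by rw [← mul_pow]; norm_num
    linear_combination (tq^dd) * h3
  refine ne_top_of_le_ne_top (@ENNReal.ofReal_ne_top (tq^dd)) ?_
  refine le_trans hb ?_
  simp only [hsum]
  rw [Filter.liminf_const]

lemma dimH_lower : ENNReal.ofReal dd ≤ dimH (Set.range cmap) := by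
  set c1 : ℝ := rq * (1 - tq) with hc1
  have hc1pos : 0 < c1 := mul_pos rq_pos (by have := tq_lt_one; linarith)
  set C : ℝ≥0 := (c1 ^ (-dd)).toNNReal with hC
  set F : ℝ → ℝ := Function.extend cmap gmap (fun _ => 0) with hF
  have hFa : ∀ a, F (cmap a) = gmap a := fun a => cmap_inj.extend_apply _ _ a
  have hHolder : HolderOnWith C ⟨dd, dd_pos.le⟩ F (Set.range cmap) := by
    rintro x ⟨a, rfl⟩ y ⟨b, rfl⟩
    rw [hFa, hFa, edist_dist, edist_dist, Real.dist_eq, Real.dist_eq]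
    have hcoe : (C : ℝ≥0∞) = ENNReal.ofReal (c1 ^ (-dd)) := rfl
    have hnn : (0:ℝ) ≤ c1 ^ (-dd) := Real.rpow_nonneg hc1pos.le _
    show ENNReal.ofReal |gmap a - gmap b|
        ≤ ENNReal.ofReal (c1^(-dd)) * ENNReal.ofReal |cmap a - cmap b| ^ dd
    rw [ENNReal.ofReal_rpow_of_nonneg (abs_nonneg _) dd_pos.le]
    rw [← ENNReal.ofReal_mul hnn]
    apply ENNReal.ofReal_le_ofReal
    by_cases hab : a = b
    · subst hab
      rw [sub_self, abs_zero]
      positivity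
    · obtain ⟨n, h1, h2⟩ := cmap_gmap_sep hab
      have hq : rq^n ≤ |cmap a - cmap b| / c1 := by
        rw [le_div_iff₀ hc1pos]
        calc rq^n * c1 = rq * (1-tq) * rq^n := by rw [hc1]; ring
          _ ≤ |cmap a - cmap b| := h1
      calc |gmap a - gmap b| ≤ (1/3:ℝ)^n := h2
        _ = (rq^n)^dd := (pow_rq_dd n).symm
        _ ≤ (|cmap a - cmap b| / c1)^dd :=
            Real.rpow_le_rpow (pow_nonneg rq_pos.le n) hq dd_pos.le
        _ = c1^(-dd) * |cmap a - cmap b|^dd := by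
            rw [Real.div_rpow (abs_nonneg _) hc1pos.le, Real.rpow_neg hc1pos.le,
              div_eq_mul_inv, mul_comm]
  have himg : Set.Icc (0:ℝ) 1 ⊆ F '' (Set.range cmap) := by
    intro x hx
    obtain ⟨a, ha⟩ := gmap_surj hx
    exact ⟨cmap a, ⟨a, rfl⟩, by rw [hFa, ha]⟩
  have hIcc : dimH (Set.Icc (0:ℝ) 1) = 1 := by
    rw [Real.dimH_of_nonempty_interior (by rw [interior_Icc]; exact ⟨(1/2 : ℝ), by norm_num⟩)]
    simp
  set ddn : ℝ≥0 := ⟨dd, dd_pos.le⟩ with hddn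
  have hchain : (1:ℝ≥0∞) ≤ dimH (Set.range cmap) / (ddn : ℝ≥0∞) := by
    calc (1:ℝ≥0∞) = dimH (Set.Icc (0:ℝ) 1) := hIcc.symm
      _ ≤ dimH (F '' Set.range cmap) := dimH_mono himg
      _ ≤ dimH (Set.range cmap) / (ddn : ℝ≥0∞) :=
          hHolder.dimH_image_le (by exact_mod_cast dd_pos)
  have hne0 : (ddn : ℝ≥0∞) ≠ 0 := by
    simp only [ne_eq, ENNReal.coe_eq_zero]
    intro hcon
    have h0 : dd = 0 := congrArg NNReal.toReal hcon
    exact dd_pos.ne' h0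
  have hd := (ENNReal.le_div_iff_mul_le (Or.inl hne0) (Or.inl ENNReal.coe_ne_top)).1 hchain
  rw [one_mul] at hd
  rw [ENNReal.ofReal_eq_coe_nnreal dd_pos.le]
  exact hd

end Dimension

theorem stmt18 :
    dimH (heavy (Real.sqrt 2 - 1)) =
      ENNReal.ofReal (Real.log 3 / Real.log (3 + 2 * Real.sqrt 2)) ∧
      0 < Real.log 3 / Real.log (3 + 2 * Real.sqrt 2) ∧
      Real.log 3 / Real.log (3 + 2 * Real.sqrt 2) < 1 := by
  have h1 : heavy (Real.sqrt 2 - 1) = Set.range cmap := heavy_eq_range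
  refine ⟨?_, dd_pos, dd_lt_one⟩
  rw [h1]
  exact le_antisymm dimH_upper dimH_lower
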